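/- Disjointness reduces to string matching: for all m, k ≥ 2 and vectors a, b ∈ {0,1}^m, setting x = a₁b₁1^{k-2}0 a₂b₂1^{k-2}0 ... a_m b_m 1^{k-2}0 (a string of length m(k+1)) and y = 1^k, one has DISJ_m(a,b) := ⋁_{i∈[m]}(a_i ∧ b_i) = SM_{m(k+1),k}(x, y). -/
import Mathlib


/-- `y` occurs as a contiguous substring of `x`. -/
def occursIn {n k : ℕ} (x : Fin n → Bool) (y : Fin k → Bool) : Prop :=
  ∃ i, ∃ _ : i + k ≤ n, ∀ t : Fin k, x ⟨i + t.val, by have := t.isLt; omega⟩ = y t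

/-- Disjointness reduces to string matching: with
`x = a₁b₁1^(k-2)0 a₂b₂1^(k-2)0 ⋯ a_m b_m 1^(k-2)0` and `y = 1^k`,
`DISJ_m(a,b) = SM_{m(k+1),k}(x,y)`. -/
theorem disj_reduces_to_SM (m k : ℕ) (hm : 1 ≤ m) (hk : 2 ≤ k)
    (a b : Fin m → Bool) :
    ((∃ i, a i = true ∧ b i = true) ↔
      occursIn
        (fun p : Fin (m * (k + 1)) =>
          if p.val % (k + 1) = 0 then a ⟨p.val / (k + 1), Nat.div_lt_of_lt_mul (Nat.mul_comm m (k+1) ▸ p.isLt)⟩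
          else if p.val % (k + 1) = 1 then b ⟨p.val / (k + 1), Nat.div_lt_of_lt_mul (Nat.mul_comm m (k+1) ▸ p.isLt)⟩
          else if p.val % (k + 1) = k then false
          else true)
        (fun _ : Fin k => true)) := by
  constructor
  · rintro ⟨i, ha, hb⟩
    refine ⟨i.val * (k + 1), by
      have : i.val + 1 ≤ m := i.isLt
      calc i.val * (k + 1) + k ≤ i.val * (k + 1) + (k + 1) := by omega
        _ = (i.val + 1) * (k + 1) := by ring
        _ ≤ m * (k + 1) := Nat.mul_le_mul_right _ this, ?_⟩
    intro t
    have hmod : (i.val * (k + 1) + t.val) % (k + 1) = t.val := by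
      rw [Nat.add_comm, Nat.add_mul_mod_self_right]
      exact Nat.mod_eq_of_lt (by have := t.isLt; omega)
    have hdiv : (i.val * (k + 1) + t.val) / (k + 1) = i.val := by
      rw [Nat.add_comm, Nat.add_mul_div_right _ _ (by omega : 0 < k + 1)]
      have : t.val / (k + 1) = 0 := Nat.div_eq_of_lt (by have := t.isLt; omega)
      omega
    simp only [hmod, hdiv]
    have h3 : t.val < k := t.isLt
    rcases Nat.lt_or_ge t.val 2 with h2 | h2
    · obtain h0 | h1 : t.val = 0 ∨ t.val = 1 := by omega
      · rw [if_pos h0]; simpa using ha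
      · rw [if_neg (by omega), if_pos h1]; simpa using hb
    · rw [if_neg (by omega), if_neg (by omega), if_neg (by omega)]
  · rintro ⟨j, hjk, ht⟩
    -- first show j % (k+1) = 0
    have hr : j % (k + 1) = 0 := by
      by_contra hr
      have hrlt : j % (k + 1) < k + 1 := Nat.mod_lt _ (by omega)
      set r := j % (k + 1) with hrdef
      have hr1 : 1 ≤ r := by omega
      have htlt : k - r < k := by omega
      have := ht ⟨k - r, htlt⟩
      simp only at this
      have hmod : (j + (k - r)) % (k + 1) = k := by
        have hd := Nat.div_add_mod j (k + 1)
        have : j + (k - r) = (k + 1) * (j / (k + 1)) + k := by omega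
        rw [this, Nat.mul_add_mod]
        exact Nat.mod_eq_of_lt (by omega)
      rw [if_neg (by omega), if_neg (by omega), if_pos hmod] at this
      exact Bool.false_ne_true this
    have hjlt : j / (k + 1) < m := by
      apply Nat.div_lt_of_lt_mul
      rw [Nat.mul_comm]
      omega
    refine ⟨⟨j / (k + 1), hjlt⟩, ?_, ?_⟩
    · have := ht ⟨0, by omega⟩
      simp only [Nat.add_zero] at this
      rwa [if_pos hr] at this
    · have := ht ⟨1, by omega⟩
      simp only at this
      have hm1 : (j + 1) % (k + 1) = 1 := by
        have hd := Nat.div_add_mod j (k + 1)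
        have : j + 1 = (k + 1) * (j / (k + 1)) + 1 := by omega
        rw [this, Nat.mul_add_mod]
        exact Nat.mod_eq_of_lt (by omega)
      have hd1 : (j + 1) / (k + 1) = j / (k + 1) := by
        have hd := Nat.div_add_mod j (k + 1)
        have : j + 1 = (k + 1) * (j / (k + 1)) + 1 := by omega
        rw [this, Nat.mul_add_div (by omega)]
        have : (1:ℕ) / (k + 1) = 0 := Nat.div_eq_of_lt (by omega)
        omega
      rw [if_neg (by omega), if_pos hm1] at this
      simpa [hd1] using this
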